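/- Let l ≥ 1, let A be a real symmetric l×l matrix, and let D = diag(d₁, …, d_l) be a diagonal matrix with d_i ≠ 0 for every i. Then λ_min(A) ≥ (1 / min_i d_i²) · min{λ_min(D·A·D), 0}. -/

import Mathlib

open Matrix

/-- Rayleigh lower bound: for a real symmetric matrix `B`, the quadratic form at `x`
is at least `λ_min(B) * ‖x‖²`. -/
lemma rayleigh_lower {n : Type*} [Fintype n] [DecidableEq n] [Nonempty n]
    {B : Matrix n n ℝ} (hB : B.IsHermitian) (x : n → ℝ) :
    (⨅ i, hB.eigenvalues i) * (x ⬝ᵥ x) ≤ x ⬝ᵥ B *ᵥ x := by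
  set U := (hB.eigenvectorUnitary : Matrix n n ℝ) with hU
  have hstar : star U = Uᵀ := by
    ext i j; simp [Matrix.star_eq_conjTranspose]
  set y := Uᵀ *ᵥ x with hy
  have hUU : U * star U = 1 := (Matrix.mem_unitaryGroup_iff).mp hB.eigenvectorUnitary.2
  have hxy : x ᵥ* U = y := by rw [hy, mulVec_transpose]
  have h1 : x ⬝ᵥ B *ᵥ x = ∑ i, hB.eigenvalues i * (y i) ^ 2 := by
    conv_lhs => rw [hB.spectral_theorem]; simp only [Unitary.conjStarAlgAut_apply, Unitary.coe_star]
    rw [← hU, ← mulVec_mulVec, ← mulVec_mulVec, dotProduct_mulVec, hxy, hstar, ← hy]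
    simp [dotProduct, mulVec_diagonal, RCLike.ofReal]
    congr 1; ext i; ring
  have h2 : x ⬝ᵥ x = ∑ i, (y i) ^ 2 := by
    have : y ⬝ᵥ y = x ⬝ᵥ x := by
      conv_lhs => rw [← hxy, ← dotProduct_mulVec, ← mulVec_transpose, ← hstar, mulVec_mulVec,
        hUU, one_mulVec]
    rw [← this]
    simp [dotProduct, sq]
  rw [h1, h2, Finset.mul_sum]
  apply Finset.sum_le_sum
  intro i _
  have h3 : (⨅ j, hB.eigenvalues j) ≤ hB.eigenvalues i :=
    ciInf_le (Set.Finite.bddBelow (Set.finite_range _)) i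
  exact mul_le_mul_of_nonneg_right h3 (sq_nonneg _)

/-- For a real symmetric `l × l` matrix `A` and an invertible diagonal
matrix `D = diag d`, the smallest eigenvalue of `A` is at least
`(1 / min_i d_i²) · min{λ_min(D·A·D), 0}`. -/
theorem stmt2 {l : ℕ} (hl : 1 ≤ l) (A : Matrix (Fin l) (Fin l) ℝ) (hA : A.IsHermitian)
    (d : Fin l → ℝ) (hd : ∀ i, d i ≠ 0)
    (hDAD : (Matrix.diagonal d * A * Matrix.diagonal d).IsHermitian) :
    (1 / ⨅ i, d i ^ 2) * min (⨅ i, hDAD.eigenvalues i) 0 ≤ ⨅ i, hA.eigenvalues i := by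
  have : Nonempty (Fin l) := ⟨⟨0, hl⟩⟩
  set m : ℝ := ⨅ i, d i ^ 2 with hm
  have hbdd : BddBelow (Set.range fun i => d i ^ 2) := Set.Finite.bddBelow (Set.finite_range _)
  have hmpos : 0 < m := by
    obtain ⟨i, hi⟩ := exists_eq_ciInf_of_finite (f := fun i => d i ^ 2)
    rw [hm, ← hi]
    have := hd i
    positivity
  set c : ℝ := min (⨅ i, hDAD.eigenvalues i) 0 with hc
  have hc0 : c ≤ 0 := min_le_right _ _
  apply le_ciInf
  intro i
  -- the i-th eigenvalue of A as a quadratic form at the unit eigenvector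
  set v : Fin l → ℝ := ⇑(hA.eigenvectorBasis i) with hv
  have hvv : v ⬝ᵥ v = 1 := by
    have h := hA.eigenvectorBasis.orthonormal.1 i
    have h2 : (inner ℝ (hA.eigenvectorBasis i) (hA.eigenvectorBasis i) : ℝ) = 1 := by
      rw [real_inner_self_eq_norm_sq, h]; norm_num
    rw [← h2, EuclideanSpace.inner_eq_star_dotProduct]
    simp [dotProduct]
    rfl
  have heig : hA.eigenvalues i = v ⬝ᵥ A *ᵥ v := by
    have := hA.eigenvalues_eq i
    simpa using this
  -- transfer the quadratic form to D A D with y = D⁻¹ v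
  set y : Fin l → ℝ := fun j => v j / d j with hy
  have hDy : Matrix.diagonal d *ᵥ y = v := by
    ext j
    simp [mulVec_diagonal, hy, mul_div_cancel₀ _ (hd j)]
  have hyD : y ᵥ* Matrix.diagonal d = v := by
    rw [← mulVec_transpose, Matrix.diagonal_transpose, hDy]
  have hform : v ⬝ᵥ A *ᵥ v = y ⬝ᵥ (Matrix.diagonal d * A * Matrix.diagonal d) *ᵥ y := by
    conv_rhs => rw [← mulVec_mulVec, ← mulVec_mulVec, hDy, dotProduct_mulVec, hyD]
  have hR : (⨅ j, hDAD.eigenvalues j) * (y ⬝ᵥ y) ≤ v ⬝ᵥ A *ᵥ v := by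
    rw [hform]; exact rayleigh_lower hDAD y
  have hyy0 : 0 ≤ y ⬝ᵥ y := by
    simp only [dotProduct]
    exact Finset.sum_nonneg fun j _ => mul_self_nonneg _
  have hcR : c * (y ⬝ᵥ y) ≤ v ⬝ᵥ A *ᵥ v :=
    le_trans (mul_le_mul_of_nonneg_right (min_le_left _ _) hyy0) hR
  -- bound y ⬝ᵥ y ≤ (v ⬝ᵥ v) / m = 1 / m
  have hyym : y ⬝ᵥ y ≤ 1 / m := by
    have h1 : y ⬝ᵥ y = ∑ j, v j ^ 2 / d j ^ 2 := by
      simp [dotProduct, hy, div_mul_div_comm, sq]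
    have h2 : ∑ j, v j ^ 2 / d j ^ 2 ≤ ∑ j, v j ^ 2 / m := by
      apply Finset.sum_le_sum
      intro j _
      exact div_le_div_of_nonneg_left (sq_nonneg _) hmpos (ciInf_le hbdd j)
    have h3 : ∑ j, v j ^ 2 / m = 1 / m := by
      rw [← Finset.sum_div]
      congr 1
      rw [← hvv]; simp [dotProduct, sq]
    rw [h1, ← h3]; exact h2
  have : (1 / m) * c ≤ c * (y ⬝ᵥ y) := by
    rw [mul_comm]
    exact mul_le_mul_of_nonpos_left hyym hc0
  calc (1 / m) * c ≤ c * (y ⬝ᵥ y) := this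
    _ ≤ v ⬝ᵥ A *ᵥ v := hcR
    _ = hA.eigenvalues i := heig.symm
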